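/- Let D_1, …, D_m be an ordered partition of [d] into nonempty stable sets of G. Then there is exactly one permutation π = a_1 a_2 ⋯ a_d of [d] such that (i) the sets D_1, …, D_m occupy consecutive blocks of positions in this order (D_i = {a_{t_{i−1}+1}, …, a_{t_i}} where t_i = |D_1| + ⋯ + |D_i|), and (ii) no position k with a_k and a_{k+1} in the same block D_i is a cut of π; equivalently, within each block consecutive letters satisfy ℓ_π(k) > ℓ_π(k+1), or ℓ_π(k) = ℓ_π(k+1) and a_k > a_{k+1}. -/

import Mathlib

/-- `ellSpec G a k p` says that there are positions `i₁ < i₂ < ⋯ < i_p < i_{p+1} = k`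
such that `a_{i_j}` and `a_{i_{j+1}}` are adjacent in `G` for all `j`. -/
def ellSpec {d : ℕ} (G : SimpleGraph (Fin d)) (a : Equiv.Perm (Fin d)) (k : Fin d)
    (p : ℕ) : Prop :=
  ∃ c : Fin (p + 1) → Fin d, StrictMono c ∧ c (Fin.last p) = k ∧
    ∀ j : Fin p, G.Adj (a (c j.castSucc)) (a (c j.succ))

/-- `ell G a k` is the largest `p` such that `ellSpec G a k p` holds: the length of the
longest increasing path in `a` ending at position `k`. -/
noncomputable def ell {d : ℕ} (G : SimpleGraph (Fin d)) (a : Equiv.Perm (Fin d))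
    (k : Fin d) : ℕ :=
  sSup {p | ellSpec G a k p}


lemma nat_lex_lt {d a a' r r' : ℕ} (hr : r < d) (hr' : r' < d) :
    a * d + r < a' * d + r' ↔ a < a' ∨ (a = a' ∧ r < r') := by
  constructor
  · intro h
    rcases lt_trichotomy a a' with h1 | h1 | h1
    · exact Or.inl h1
    · subst h1; exact Or.inr ⟨rfl, by omega⟩
    · exfalso
      have : a' * d + d ≤ a * d := by
        have : a' + 1 ≤ a := h1
        calc a' * d + d = (a' + 1) * d := by ring
        _ ≤ a * d := Nat.mul_le_mul_right d this
      omega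
  · rintro (h1 | ⟨h1, h2⟩)
    · have : a * d + d ≤ a' * d := by
        have : a + 1 ≤ a' := h1
        calc a * d + d = (a + 1) * d := by ring
        _ ≤ a' * d := Nat.mul_le_mul_right d this
      omega
    · subst h1; omega

open Classical in
noncomputable def fval {d : ℕ} (G : SimpleGraph (Fin d)) (b : Fin d → ℕ) : Fin d → ℕ
  | v => ((Finset.univ.filter (fun u => G.Adj u v ∧ b u < b v)).attach.sup
      fun u => fval G b u.1 + 1)
  termination_by v => b v
  decreasing_by exact (Finset.mem_filter.mp u.2).2.2

open Classical in
lemma fval_def {d : ℕ} (G : SimpleGraph (Fin d)) (b : Fin d → ℕ) (v : Fin d) :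
    fval G b v = ((Finset.univ.filter (fun u => G.Adj u v ∧ b u < b v)).attach.sup
      fun u => fval G b u.1 + 1) := by
  rw [fval]

lemma le_fval {d : ℕ} {G : SimpleGraph (Fin d)} {b : Fin d → ℕ} {u v : Fin d}
    (h : G.Adj u v) (hb : b u < b v) : fval G b u + 1 ≤ fval G b v := by
  classical
  rw [fval_def G b v]
  have hm : u ∈ Finset.univ.filter (fun u => G.Adj u v ∧ b u < b v) := by
    simp [h, hb]
  exact Finset.le_sup (f := fun u => fval G b u.1 + 1) (Finset.mem_attach _ ⟨u, hm⟩)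

lemma fval_cases {d : ℕ} (G : SimpleGraph (Fin d)) (b : Fin d → ℕ) (v : Fin d) :
    fval G b v = 0 ∨ ∃ u, G.Adj u v ∧ b u < b v ∧ fval G b v = fval G b u + 1 := by
  classical
  rcases Nat.eq_zero_or_pos (fval G b v) with h | h
  · exact Or.inl h
  · right
    rw [fval_def] at h
    have hne : (Finset.univ.filter (fun u => G.Adj u v ∧ b u < b v)).attach.Nonempty := by
      by_contra hc
      rw [Finset.not_nonempty_iff_eq_empty] at hc
      rw [hc] at h
      simp at h
    obtain ⟨u, -, hu⟩ := Finset.exists_mem_eq_sup _ hne (fun u => fval G b u.1 + 1)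
    refine ⟨u.1, ?_, ?_, ?_⟩
    · exact (Finset.mem_filter.mp u.2).2.1
    · exact (Finset.mem_filter.mp u.2).2.2
    · rw [fval_def G b v]; exact hu

lemma ellSpec_zero {d : ℕ} (G : SimpleGraph (Fin d)) (a : Equiv.Perm (Fin d)) (k : Fin d) :
    ellSpec G a k 0 :=
  ⟨fun _ => k, fun x y h => by
    have := x.isLt; have := y.isLt; rw [Fin.lt_def] at h; omega, rfl, fun j => j.elim0⟩

lemma ellSpec_lt {d : ℕ} {G : SimpleGraph (Fin d)} {a : Equiv.Perm (Fin d)} {k : Fin d}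
    {p : ℕ} (h : ellSpec G a k p) : p < d := by
  obtain ⟨c, hc, -, -⟩ := h
  have := Fintype.card_le_of_injective c hc.injective
  simpa using this

lemma ell_bddAbove {d : ℕ} (G : SimpleGraph (Fin d)) (a : Equiv.Perm (Fin d)) (k : Fin d) :
    BddAbove {p | ellSpec G a k p} :=
  ⟨d, fun _ hp => (ellSpec_lt hp).le⟩

lemma ell_spec {d : ℕ} (G : SimpleGraph (Fin d)) (a : Equiv.Perm (Fin d)) (k : Fin d) :
    ellSpec G a k (ell G a k) := by
  have h0 : (0:ℕ) ∈ {p | ellSpec G a k p} := ellSpec_zero G a k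
  exact Nat.sSup_mem ⟨0, h0⟩ (ell_bddAbove G a k)

lemma le_ell {d : ℕ} {G : SimpleGraph (Fin d)} {a : Equiv.Perm (Fin d)} {k : Fin d}
    {p : ℕ} (h : ellSpec G a k p) : p ≤ ell G a k :=
  le_csSup (ell_bddAbove G a k) h

lemma ellSpec_succ_iff {d : ℕ} {G : SimpleGraph (Fin d)} {a : Equiv.Perm (Fin d)}
    {k : Fin d} {p : ℕ} :
    ellSpec G a k (p + 1) ↔ ∃ i, i < k ∧ G.Adj (a i) (a k) ∧ ellSpec G a i p := by
  constructor
  · rintro ⟨c, hc, hlast, hadj⟩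
    refine ⟨c (Fin.last p).castSucc, ?_, ?_, ?_⟩
    · rw [← hlast]
      exact hc (Fin.castSucc_lt_last _)
    · have := hadj (Fin.last p)
      rwa [Fin.succ_last, hlast] at this
    · refine ⟨fun j => c j.castSucc, fun x y hxy => hc (by simpa using hxy), rfl, ?_⟩
      intro j
      have := hadj j.castSucc
      rwa [Fin.succ_castSucc] at this
  · rintro ⟨i, hik, hadj, c, hc, hlast, hcadj⟩
    refine ⟨Fin.snoc c k, ?_, ?_, ?_⟩
    · rw [Fin.strictMono_iff_lt_succ]
      intro j
      refine Fin.lastCases ?_ ?_ j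
      · rw [Fin.succ_last]
        simp only [Fin.snoc_castSucc, Fin.snoc_last, hlast]
        exact hik
      · intro j'
        rw [Fin.succ_castSucc]
        simp only [Fin.snoc_castSucc]
        exact hc (Fin.castSucc_lt_succ (i := j'))
    · simp
    · intro j
      refine Fin.lastCases ?_ ?_ j
      · rw [Fin.succ_last]
        simp only [Fin.snoc_castSucc, Fin.snoc_last, hlast]
        exact hadj
      · intro j'
        rw [Fin.succ_castSucc]
        simp only [Fin.snoc_castSucc]
        exact hcadj j'

section Partition

variable {d m : ℕ}

noncomputable def blk (D : Fin m → Finset (Fin d)) (hpart : ∀ v : Fin d, ∃! i, v ∈ D i)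
    (v : Fin d) : Fin m := (hpart v).choose

lemma blk_mem (D : Fin m → Finset (Fin d)) (hpart : ∀ v : Fin d, ∃! i, v ∈ D i)
    (v : Fin d) : v ∈ D (blk D hpart v) := (hpart v).choose_spec.1

lemma blk_eq_of_mem (D : Fin m → Finset (Fin d)) (hpart : ∀ v : Fin d, ∃! i, v ∈ D i)
    {v : Fin d} {i : Fin m} (h : v ∈ D i) : blk D hpart v = i :=
  ((hpart v).choose_spec.2 i h).symm

def Ssum (D : Fin m → Finset (Fin d)) (i : Fin m) : ℕ :=
  ∑ j ∈ Finset.univ.filter (fun j => j < i), (D j).card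

def Tsum (D : Fin m → Finset (Fin d)) (i : Fin m) : ℕ :=
  ∑ j ∈ Finset.univ.filter (fun j => j ≤ i), (D j).card

lemma Ssum_le_Tsum (D : Fin m → Finset (Fin d)) (i : Fin m) : Ssum D i ≤ Tsum D i := by
  apply Finset.sum_le_sum_of_subset
  intro j hj
  simp only [Finset.mem_filter, Finset.mem_univ, true_and] at *
  exact le_of_lt hj

lemma Tsum_le_Ssum (D : Fin m → Finset (Fin d)) {i i' : Fin m} (h : i < i') :
    Tsum D i ≤ Ssum D i' := by
  apply Finset.sum_le_sum_of_subset
  intro j hj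
  simp only [Finset.mem_filter, Finset.mem_univ, true_and] at *
  exact lt_of_le_of_lt hj h

lemma card_blk_filter (D : Fin m → Finset (Fin d)) (hpart : ∀ v : Fin d, ∃! i, v ∈ D i)
    (P : Fin m → Prop) [DecidablePred P]
    [DecidablePred (fun v : Fin d => P (blk D hpart v))] :
    (Finset.univ.filter (fun v : Fin d => P (blk D hpart v))).card
      = ∑ j ∈ Finset.univ.filter P, (D j).card := by
  have hset : Finset.univ.filter (fun v : Fin d => P (blk D hpart v))
      = (Finset.univ.filter P).biUnion D := by
    ext v
    simp only [Finset.mem_filter, Finset.mem_univ, true_and, Finset.mem_biUnion]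
    constructor
    · intro h
      exact ⟨blk D hpart v, h, blk_mem D hpart v⟩
    · rintro ⟨j, hj, hv⟩
      rwa [blk_eq_of_mem D hpart hv]
  rw [hset]
  apply Finset.card_biUnion
  intro x _ y _ hxy
  rw [Function.onFun, Finset.disjoint_left]
  intro v hvx hvy
  exact hxy ((blk_eq_of_mem D hpart hvx).symm.trans (blk_eq_of_mem D hpart hvy))

lemma mem_iff_lt_card {s : Finset (Fin d)}
    (hdc : ∀ k k' : Fin d, k ≤ k' → k' ∈ s → k ∈ s) (k : Fin d) :
    k ∈ s ↔ (k : ℕ) < s.card := by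
  constructor
  · intro hk
    have hsub : Finset.Iic k ⊆ s := fun j hj => hdc j k (Finset.mem_Iic.mp hj) hk
    have h1 := Finset.card_le_card hsub
    rw [Fin.card_Iic] at h1
    omega
  · intro hk
    by_contra hks
    have hsub : s ⊆ Finset.Iio k := by
      intro j hj
      rw [Finset.mem_Iio]
      by_contra hjk
      exact hks (hdc k j (not_lt.mp hjk) hj)
    have h1 := Finset.card_le_card hsub
    rw [Fin.card_Iio] at h1
    omega

end Partition

section Positions

variable {d m : ℕ} {G : SimpleGraph (Fin d)} {D : Fin m → Finset (Fin d)}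
  {a : Equiv.Perm (Fin d)}

/-- Condition (i) of the theorem, in terms of `Ssum`/`Tsum`. -/
def CondI (D : Fin m → Finset (Fin d)) (a : Equiv.Perm (Fin d)) : Prop :=
  ∀ i : Fin m, ∀ k : Fin d, a k ∈ D i ↔ (Ssum D i ≤ (k : ℕ) ∧ (k : ℕ) < Tsum D i)

lemma posS (hpart : ∀ v : Fin d, ∃! i, v ∈ D i) (hi : CondI D a) (k : Fin d) :
    Ssum D (blk D hpart (a k)) ≤ (k : ℕ) ∧ (k : ℕ) < Tsum D (blk D hpart (a k)) :=
  (hi _ k).mp (blk_mem D hpart (a k))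

lemma blk_mono (hpart : ∀ v : Fin d, ∃! i, v ∈ D i) (hi : CondI D a) {k k' : Fin d}
    (h : k ≤ k') : blk D hpart (a k) ≤ blk D hpart (a k') := by
  by_contra hc
  have hlt : blk D hpart (a k') < blk D hpart (a k) := not_le.mp hc
  have h1 := posS hpart hi k
  have h2 := posS hpart hi k'
  have h3 := Tsum_le_Ssum D hlt
  have h4 : (k : ℕ) ≤ (k' : ℕ) := h
  omega

lemma pos_lt_of_blk_lt (hpart : ∀ v : Fin d, ∃! i, v ∈ D i) (hi : CondI D a) {u : Fin d}
    {k : Fin d} (h : blk D hpart u < blk D hpart (a k)) : ((a.symm u : Fin d) : ℕ) < (k : ℕ) := by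
  have h1 := posS hpart hi (a.symm u)
  rw [Equiv.apply_symm_apply] at h1
  have h2 := posS hpart hi k
  have h3 := Tsum_le_Ssum D h
  omega

lemma blk_lt_of_adj (hpart : ∀ v : Fin d, ∃! i, v ∈ D i)
    (hstable : ∀ i, ∀ u ∈ D i, ∀ v ∈ D i, ¬ G.Adj u v)
    (hi : CondI D a) {i k : Fin d} (hik : i < k) (hadj : G.Adj (a i) (a k)) :
    blk D hpart (a i) < blk D hpart (a k) := by
  rcases lt_or_eq_of_le (blk_mono hpart hi hik.le) with h | h
  · exact h
  · exfalso
    exact hstable _ _ (blk_mem D hpart (a i)) _ (h ▸ blk_mem D hpart (a k)) hadj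

lemma ell_eq_fval (hpart : ∀ v : Fin d, ∃! i, v ∈ D i)
    (hstable : ∀ i, ∀ u ∈ D i, ∀ v ∈ D i, ¬ G.Adj u v)
    (hi : CondI D a) (k : Fin d) :
    ell G a k = fval G (fun v => (blk D hpart v : ℕ)) (a k) := by
  set bN : Fin d → ℕ := fun v => (blk D hpart v : ℕ) with hbN
  suffices h : ∀ n : ℕ, ∀ k : Fin d, (k : ℕ) < n → ell G a k = fval G bN (a k) by
    exact h (d + 1) k (by have := k.isLt; omega)
  intro n
  induction n with
  | zero => intro k hk; omega
  | succ n IHn =>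
  intro k hk
  have IH : ∀ i : Fin d, i < k → ell G a i = fval G bN (a i) := by
    intro i hik
    refine IHn i ?_
    rw [Fin.lt_def] at hik
    omega
  apply le_antisymm
  · -- ell ≤ fval
    rcases Nat.eq_zero_or_pos (ell G a k) with h0 | hpos
    · omega
    · obtain ⟨q, hq⟩ : ∃ q, ell G a k = q + 1 := ⟨ell G a k - 1, by omega⟩
      have hspec := ell_spec G a k
      rw [hq] at hspec
      obtain ⟨i, hik, hadj, hspec'⟩ := ellSpec_succ_iff.mp hspec
      have hIH := IH i hik
      have hq' : q ≤ fval G bN (a i) := hIH ▸ le_ell hspec'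
      have hblk : bN (a i) < bN (a k) := by
        exact blk_lt_of_adj hpart hstable hi hik hadj
      have := le_fval hadj hblk
      omega
  · -- fval ≤ ell
    rcases fval_cases G bN (a k) with h0 | ⟨u, hadj, hblk, heq⟩
    · omega
    · set i : Fin d := a.symm u with hi'
      have hau : a i = u := a.apply_symm_apply u
      have hik : i < k := by
        rw [Fin.lt_def]
        exact pos_lt_of_blk_lt hpart hi hblk
      have hIH := IH i hik
      have hspeci : ellSpec G a i (fval G bN u) := by
        have := ell_spec G a i
        rwa [hIH, hau] at this
      have hspec : ellSpec G a k (fval G bN u + 1) :=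
        ellSpec_succ_iff.mpr ⟨i, hik, hau ▸ hadj, hspeci⟩
      rw [heq]
      exact le_ell hspec

end Positions

section Kfun

variable {d m : ℕ}

noncomputable def keyf (G : SimpleGraph (Fin d)) (D : Fin m → Finset (Fin d))
    (hpart : ∀ v : Fin d, ∃! i, v ∈ D i) (v : Fin d) : ℕ :=
  fval G (fun u => (blk D hpart u : ℕ)) v * d + (v : ℕ)

noncomputable def Bbound (G : SimpleGraph (Fin d)) (D : Fin m → Finset (Fin d))
    (hpart : ∀ v : Fin d, ∃! i, v ∈ D i) : ℕ :=
  (Finset.univ.sup (fval G (fun u => (blk D hpart u : ℕ)))) * d + d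

noncomputable def Kfun (G : SimpleGraph (Fin d)) (D : Fin m → Finset (Fin d))
    (hpart : ∀ v : Fin d, ∃! i, v ∈ D i) (v : Fin d) : ℕ :=
  (blk D hpart v : ℕ) * Bbound G D hpart + (Bbound G D hpart - 1 - keyf G D hpart v)

variable {G : SimpleGraph (Fin d)} {D : Fin m → Finset (Fin d)}
  {hpart : ∀ v : Fin d, ∃! i, v ∈ D i}

lemma keyf_lt_B (v : Fin d) : keyf G D hpart v < Bbound G D hpart := by
  have h1 : fval G (fun u => (blk D hpart u : ℕ)) v
      ≤ Finset.univ.sup (fval G (fun u => (blk D hpart u : ℕ))) :=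
    Finset.le_sup (Finset.mem_univ v)
  have h2 : (v : ℕ) < d := v.isLt
  unfold keyf Bbound
  have := Nat.mul_le_mul_right d h1
  omega

lemma keyf_lt_iff {u w : Fin d} :
    keyf G D hpart u < keyf G D hpart w ↔
      fval G (fun x => (blk D hpart x : ℕ)) u < fval G (fun x => (blk D hpart x : ℕ)) w ∨
      (fval G (fun x => (blk D hpart x : ℕ)) u = fval G (fun x => (blk D hpart x : ℕ)) w ∧ u < w) := by
  unfold keyf
  rw [nat_lex_lt u.isLt w.isLt, Fin.lt_def]

lemma Kfun_lt_iff {u w : Fin d} :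
    Kfun G D hpart u < Kfun G D hpart w ↔
      blk D hpart u < blk D hpart w ∨
      (blk D hpart u = blk D hpart w ∧ keyf G D hpart w < keyf G D hpart u) := by
  have hu := keyf_lt_B (G := G) (D := D) (hpart := hpart) u
  have hw := keyf_lt_B (G := G) (D := D) (hpart := hpart) w
  have hB : 0 < Bbound G D hpart := by omega
  unfold Kfun
  rw [nat_lex_lt (by omega) (by omega), Fin.lt_def, Fin.ext_iff]
  constructor
  · rintro (h | ⟨h1, h2⟩)
    · exact Or.inl h
    · exact Or.inr ⟨h1, by omega⟩
  · rintro (h | ⟨h1, h2⟩)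
    · exact Or.inl h
    · exact Or.inr ⟨h1, by omega⟩

lemma Kfun_injective : Function.Injective (Kfun G D hpart) := by
  intro u w h
  by_contra hne
  have hkey : keyf G D hpart u ≠ keyf G D hpart w → False := by
    intro hk
    rcases lt_or_gt_of_ne hk with hk | hk
    all_goals rcases lt_trichotomy (blk D hpart u) (blk D hpart w) with hb | hb | hb
    · exact absurd h (ne_of_lt (Kfun_lt_iff.mpr (Or.inl hb)))
    · exact absurd h.symm (ne_of_lt (Kfun_lt_iff.mpr (Or.inr ⟨hb.symm, hk⟩)))
    · exact absurd h.symm (ne_of_lt (Kfun_lt_iff.mpr (Or.inl hb)))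
    · exact absurd h (ne_of_lt (Kfun_lt_iff.mpr (Or.inl hb)))
    · exact absurd h (ne_of_lt (Kfun_lt_iff.mpr (Or.inr ⟨hb, hk⟩)))
    · exact absurd h.symm (ne_of_lt (Kfun_lt_iff.mpr (Or.inl hb)))
  apply hkey
  intro hk
  unfold keyf at hk
  have hu : (u : ℕ) < d := u.isLt
  have hw : (w : ℕ) < d := w.isLt
  have : (u : ℕ) = (w : ℕ) := by
    rcases lt_trichotomy (fval G (fun x => (blk D hpart x : ℕ)) u)
      (fval G (fun x => (blk D hpart x : ℕ)) w) with hf | hf | hf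
    · have := Nat.mul_le_mul_right d (Nat.succ_le_of_lt hf)
      simp [Nat.succ_mul] at this
      omega
    · rw [hf] at hk; omega
    · have := Nat.mul_le_mul_right d (Nat.succ_le_of_lt hf)
      simp [Nat.succ_mul] at this
      omega
  exact hne (Fin.ext this)

end Kfun

lemma strictMono_of_consec {d : ℕ} {α : Type*} [Preorder α] {f : Fin d → α}
    (h : ∀ k k' : Fin d, (k : ℕ) + 1 = (k' : ℕ) → f k < f k') : StrictMono f := by
  have key : ∀ n : ℕ, ∀ k k' : Fin d, (k' : ℕ) = (k : ℕ) + n + 1 → f k < f k' := by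
    intro n
    induction n with
    | zero => intro k k' hk; exact h k k' (by omega)
    | succ n ih =>
      intro k k' hk
      have hlt : (k : ℕ) + n + 1 < d := by have := k'.isLt; omega
      exact lt_trans (ih k ⟨(k : ℕ) + n + 1, hlt⟩ rfl) (h ⟨(k : ℕ) + n + 1, hlt⟩ k' (by simp; omega))
  intro x y hxy
  rw [Fin.lt_def] at hxy
  exact key ((y : ℕ) - (x : ℕ) - 1) x y (by omega)

section Core

variable {d m : ℕ} {G : SimpleGraph (Fin d)} {D : Fin m → Finset (Fin d)}
  {a : Equiv.Perm (Fin d)}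

def CondII (G : SimpleGraph (Fin d)) (D : Fin m → Finset (Fin d))
    (a : Equiv.Perm (Fin d)) : Prop :=
  ∀ k k' : Fin d, (k : ℕ) + 1 = (k' : ℕ) → (∃ i, a k ∈ D i ∧ a k' ∈ D i) →
    (ell G a k' < ell G a k ∨ (ell G a k = ell G a k' ∧ a k' < a k))

lemma strictMono_K_of (hpart : ∀ v : Fin d, ∃! i, v ∈ D i)
    (hstable : ∀ i, ∀ u ∈ D i, ∀ v ∈ D i, ¬ G.Adj u v)
    (hi : CondI D a) (hii : CondII G D a) :
    StrictMono (fun k => Kfun G D hpart (a k)) := by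
  apply strictMono_of_consec
  intro k k' hkk'
  by_cases hb : blk D hpart (a k) = blk D hpart (a k')
  · -- same block
    have hmem : ∃ i, a k ∈ D i ∧ a k' ∈ D i :=
      ⟨blk D hpart (a k), blk_mem D hpart (a k), hb ▸ blk_mem D hpart (a k')⟩
    have hcmp := hii k k' hkk' hmem
    rw [ell_eq_fval hpart hstable hi k, ell_eq_fval hpart hstable hi k'] at hcmp
    have hkey : keyf G D hpart (a k') < keyf G D hpart (a k) := by
      rw [keyf_lt_iff]
      rcases hcmp with h | ⟨h1, h2⟩
      · exact Or.inl h
      · exact Or.inr ⟨h1.symm, h2⟩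
    exact Kfun_lt_iff.mpr (Or.inr ⟨hb, hkey⟩)
  · -- different blocks
    have hle : blk D hpart (a k) ≤ blk D hpart (a k') :=
      blk_mono hpart hi (by rw [Fin.le_def]; omega)
    exact Kfun_lt_iff.mpr (Or.inl (lt_of_le_of_ne hle hb))

lemma condI_of_strictMono (hpart : ∀ v : Fin d, ∃! i, v ∈ D i)
    (hK : StrictMono (fun k => Kfun G D hpart (a k))) : CondI D a := by
  have blkm : Monotone (fun k => blk D hpart (a k)) := by
    intro k k' hkk'
    rcases eq_or_lt_of_le hkk' with h | h
    · rw [h]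
    · by_contra hc
      have hlt : blk D hpart (a k') < blk D hpart (a k) := not_le.mp hc
      have h1 : Kfun G D hpart (a k') < Kfun G D hpart (a k) :=
        Kfun_lt_iff.mpr (Or.inl hlt)
      have h2 : Kfun G D hpart (a k) < Kfun G D hpart (a k') := hK h
      omega
  have main : ∀ (P : Fin m → Prop) (_ : DecidablePred P)
      (_ : ∀ i i' : Fin m, i ≤ i' → P i' → P i) (k : Fin d),
      P (blk D hpart (a k)) ↔ (k : ℕ) < ∑ j ∈ Finset.univ.filter P, (D j).card := by
    intro P hdecP hPdc k
    classical
    set s : Finset (Fin d) := Finset.univ.filter (fun k => P (blk D hpart (a k))) with hs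
    have hdc : ∀ k k' : Fin d, k ≤ k' → k' ∈ s → k ∈ s := by
      intro x y hxy hy
      simp only [hs, Finset.mem_filter, Finset.mem_univ, true_and] at *
      exact hPdc _ _ (blkm hxy) hy
    have hcard : s.card = ∑ j ∈ Finset.univ.filter P, (D j).card := by
      have himg : s = Finset.image (⇑a.symm) (Finset.univ.filter (fun v => P (blk D hpart v))) := by
        ext x
        simp only [hs, Finset.mem_filter, Finset.mem_univ, true_and, Finset.mem_image]
        constructor
        · intro hx
          exact ⟨a x, hx, a.symm_apply_apply x⟩
        · rintro ⟨v, hv, rfl⟩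
          rwa [Equiv.apply_symm_apply]
      rw [himg, Finset.card_image_of_injective _ a.symm.injective,
        card_blk_filter D hpart P]
    have := mem_iff_lt_card hdc k
    rw [hcard] at this
    simpa only [hs, Finset.mem_filter, Finset.mem_univ, true_and] using this
  intro i k
  classical
  have hlt := main (fun j => j < i) inferInstance
    (fun x y hxy hy => lt_of_le_of_lt hxy hy) k
  have hle := main (fun j => j ≤ i) inferInstance
    (fun x y hxy hy => le_trans hxy hy) k
  constructor
  · intro hmem
    have hbi : blk D hpart (a k) = i := blk_eq_of_mem D hpart hmem
    constructor
    · have : ¬ (blk D hpart (a k) < i) := by rw [hbi]; exact lt_irrefl i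
      rw [hlt] at this
      exact not_lt.mp (by simpa [Ssum] using this)
    · have : blk D hpart (a k) ≤ i := le_of_eq hbi
      rw [hle] at this
      simpa [Tsum] using this
  · rintro ⟨h1, h2⟩
    have hnlt : ¬ (blk D hpart (a k) < i) := by
      rw [hlt]
      simp only [Ssum] at h1
      omega
    have hble : blk D hpart (a k) ≤ i := by
      rw [hle]
      simpa [Tsum] using h2
    have hbi : blk D hpart (a k) = i := le_antisymm hble (not_lt.mp hnlt)
    exact hbi ▸ blk_mem D hpart (a k)

lemma condII_of_strictMono (hpart : ∀ v : Fin d, ∃! i, v ∈ D i)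
    (hstable : ∀ i, ∀ u ∈ D i, ∀ v ∈ D i, ¬ G.Adj u v)
    (hi : CondI D a)
    (hK : StrictMono (fun k => Kfun G D hpart (a k))) : CondII G D a := by
  intro k k' hkk' ⟨i, h1, h2⟩
  have hb : blk D hpart (a k) = blk D hpart (a k') :=
    (blk_eq_of_mem D hpart h1).trans (blk_eq_of_mem D hpart h2).symm
  have hKlt : Kfun G D hpart (a k) < Kfun G D hpart (a k') :=
    hK (by rw [Fin.lt_def]; omega)
  rcases Kfun_lt_iff.mp hKlt with h | ⟨-, hkey⟩
  · rw [hb] at h; exact absurd h (lt_irrefl _)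
  · rw [ell_eq_fval hpart hstable hi k, ell_eq_fval hpart hstable hi k']
    rcases keyf_lt_iff.mp hkey with h | ⟨h3, h4⟩
    · exact Or.inl h
    · exact Or.inr ⟨h3.symm, h4⟩

end Core

/-- Given an ordered partition `D 0, …, D (m-1)` of the vertex set of
`G` into nonempty stable sets, there is exactly one permutation `a` such that
(i) the sets occupy consecutive blocks of positions in the given order (the letters of
`D i` occupy the positions `k` with `|D 0| + ⋯ + |D (i-1)| ≤ k < |D 0| + ⋯ + |D i|`),
and (ii) no boundary between two consecutive positions inside a block is a cut, i.e.
within each block consecutive positions `k, k+1` satisfy `ℓ(k) > ℓ(k+1)`, or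
`ℓ(k) = ℓ(k+1)` and `a_k > a_{k+1}`. -/
theorem existsUnique_perm_of_ordered_partition {d m : ℕ} (hd : 1 ≤ d)
    (G : SimpleGraph (Fin d)) (D : Fin m → Finset (Fin d))
    (hne : ∀ i, (D i).Nonempty)
    (hstable : ∀ i, ∀ u ∈ D i, ∀ v ∈ D i, ¬ G.Adj u v)
    (hpart : ∀ v : Fin d, ∃! i, v ∈ D i) :
    ∃! a : Equiv.Perm (Fin d),
      (∀ i : Fin m, ∀ k : Fin d,
        a k ∈ D i ↔ ((∑ j ∈ Finset.univ.filter (fun j => j < i), (D j).card) ≤ (k : ℕ) ∧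
          (k : ℕ) < ∑ j ∈ Finset.univ.filter (fun j => j ≤ i), (D j).card)) ∧
      (∀ k k' : Fin d, (k : ℕ) + 1 = (k' : ℕ) → (∃ i, a k ∈ D i ∧ a k' ∈ D i) →
        (ell G a k' < ell G a k ∨ (ell G a k = ell G a k' ∧ a k' < a k))) := by
  classical
  set K : Fin d → ℕ := Kfun G D hpart with hKdef
  set a₀ : Equiv.Perm (Fin d) := Tuple.sort K with ha₀
  have hmono : Monotone (K ∘ a₀) := Tuple.monotone_sort K
  have hinj : Function.Injective (K ∘ ⇑a₀) := Kfun_injective.comp a₀.injective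
  have hsm : StrictMono (fun k => Kfun G D hpart (a₀ k)) :=
    hmono.strictMono_of_injective hinj
  have hi₀ : CondI D a₀ := condI_of_strictMono hpart hsm
  have hii₀ : CondII G D a₀ := condII_of_strictMono hpart hstable hi₀ hsm
  refine ⟨a₀, ⟨hi₀, hii₀⟩, ?_⟩
  rintro a ⟨hiA, hiiA⟩
  have hsmA : StrictMono (fun k => Kfun G D hpart (a k)) :=
    strictMono_K_of hpart hstable hiA hiiA
  have hrangeA : Set.range (fun k => Kfun G D hpart (a k)) = Set.range (Kfun G D hpart) :=
    a.surjective.range_comp (Kfun G D hpart)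
  have hrange₀ : Set.range (fun k => Kfun G D hpart (a₀ k)) = Set.range (Kfun G D hpart) :=
    a₀.surjective.range_comp (Kfun G D hpart)
  have heq := (hsmA.range_inj hsm).mp (hrangeA.trans hrange₀.symm)
  apply Equiv.ext
  intro k
  exact Kfun_injective (congrFun heq k)
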